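/- Conservative form of the characteristic system. Let c : ℝ → ℝ be continuously differentiable with c(v) > 0 for all v, and let u : ℝ² → ℝ be twice continuously differentiable and satisfy u_tt − c(u)(c(u)u_x)_x = 0 on ℝ². Set R = u_t + c(u)u_x and S = u_t − c(u)u_x. Then at every point of ℝ², ∂_t(R² + S²) − ∂_x(c(u)(R² − S²)) = 0 and ∂_t((R² − S²)/c(u)) − ∂_x(R² + S²) = 0. -/

import Mathlib

/-- Partial derivative with respect to the first (time) variable. -/
noncomputable def pdt (f : ℝ × ℝ → ℝ) (p : ℝ × ℝ) : ℝ := fderiv ℝ f p (1, 0)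

/-- Partial derivative with respect to the second (space) variable. -/
noncomputable def pdx (f : ℝ × ℝ → ℝ) (p : ℝ × ℝ) : ℝ := fderiv ℝ f p (0, 1)

lemma fd_add {f g : ℝ × ℝ → ℝ} {p v : ℝ × ℝ} (hf : DifferentiableAt ℝ f p)
    (hg : DifferentiableAt ℝ g p) :
    fderiv ℝ (fun q => f q + g q) p v = fderiv ℝ f p v + fderiv ℝ g p v := by
  rw [fderiv_fun_add hf hg]; rfl

lemma fd_mul {f g : ℝ × ℝ → ℝ} {p v : ℝ × ℝ} (hf : DifferentiableAt ℝ f p)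
    (hg : DifferentiableAt ℝ g p) :
    fderiv ℝ (fun q => f q * g q) p v = f p * fderiv ℝ g p v + g p * fderiv ℝ f p v := by
  rw [fderiv_fun_mul hf hg]; simp

lemma fd_cmul {f : ℝ × ℝ → ℝ} {p v : ℝ × ℝ} (a : ℝ) (hf : DifferentiableAt ℝ f p) :
    fderiv ℝ (fun q => a * f q) p v = a * fderiv ℝ f p v := by
  rw [fderiv_const_mul hf]; rfl

lemma fd_sq {f : ℝ × ℝ → ℝ} {p v : ℝ × ℝ} (hf : DifferentiableAt ℝ f p) :
    fderiv ℝ (fun q => f q ^ 2) p v = 2 * f p * fderiv ℝ f p v := by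
  have h : (fun q => f q ^ 2) = fun q => f q * f q := by funext q; ring
  rw [h, fd_mul hf hf]; ring

lemma fd_comp {c : ℝ → ℝ} {u : ℝ × ℝ → ℝ} {p v : ℝ × ℝ}
    (hc : DifferentiableAt ℝ c (u p)) (hu : DifferentiableAt ℝ u p) :
    fderiv ℝ (fun q => c (u q)) p v = deriv c (u p) * fderiv ℝ u p v := by
  have h : (fun q => c (u q)) = c ∘ u := rfl
  rw [h, fderiv_comp p hc hu]
  show fderiv ℝ c (u p) (fderiv ℝ u p v) = _
  have h2 : fderiv ℝ c (u p) (fderiv ℝ u p v) = fderiv ℝ u p v * deriv c (u p) := by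
    conv_lhs => rw [show fderiv ℝ u p v = (fderiv ℝ u p v) • (1 : ℝ) by simp]
    rw [map_smul, smul_eq_mul, fderiv_apply_one_eq_deriv]
  rw [h2]; ring

lemma mixed_symm {u : ℝ × ℝ → ℝ} (hu : ContDiff ℝ 2 u) (p : ℝ × ℝ) :
    pdx (pdt u) p = pdt (pdx u) p := by
  have hsymm := (hu.contDiffAt (x := p)).isSymmSndFDerivAt (by rw [minSmoothness_of_isRCLikeNormedField])
  have hfd : DifferentiableAt ℝ (fderiv ℝ u) p :=
    ((hu.fderiv_right (m := 1) le_rfl).differentiable one_ne_zero).differentiableAt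
  have key : ∀ v w : ℝ × ℝ,
      fderiv ℝ (fun q => fderiv ℝ u q v) p w = fderiv ℝ (fderiv ℝ u) p w v := by
    intro v w
    have h : (fun q => fderiv ℝ u q v)
        = (ContinuousLinearMap.apply ℝ ℝ v) ∘ (fderiv ℝ u) := rfl
    rw [h, fderiv_comp p (ContinuousLinearMap.apply ℝ ℝ v).differentiableAt hfd,
      ContinuousLinearMap.fderiv]
    rfl
  show fderiv ℝ (fun q => fderiv ℝ u q (1,0)) p (0,1)
      = fderiv ℝ (fun q => fderiv ℝ u q (0,1)) p (1,0)
  rw [key, key, hsymm]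


/-- Conservative form of the characteristic system: if `c` is `C¹`
with `c > 0` and `u` is a `C²` solution of `u_tt - c(u)(c(u)u_x)_x = 0`, then with
`R = u_t + c(u)u_x` and `S = u_t - c(u)u_x`, at every point
`∂_t (R² + S²) - ∂_x (c(u)(R² - S²)) = 0` and
`∂_t ((R² - S²)/c(u)) - ∂_x (R² + S²) = 0`. -/
theorem nvw_conservative_form
    (c : ℝ → ℝ) (hc : ContDiff ℝ 1 c) (hcpos : ∀ v : ℝ, 0 < c v)
    (u : ℝ × ℝ → ℝ) (hu : ContDiff ℝ 2 u)
    (heq : ∀ p : ℝ × ℝ,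
      pdt (pdt u) p - c (u p) * pdx (fun q => c (u q) * pdx u q) p = 0)
    (R S : ℝ × ℝ → ℝ)
    (hR : ∀ p : ℝ × ℝ, R p = pdt u p + c (u p) * pdx u p)
    (hS : ∀ p : ℝ × ℝ, S p = pdt u p - c (u p) * pdx u p) :
    ∀ p : ℝ × ℝ,
      pdt (fun q => R q ^ 2 + S q ^ 2) p
          - pdx (fun q => c (u q) * (R q ^ 2 - S q ^ 2)) p = 0 ∧
      pdt (fun q => (R q ^ 2 - S q ^ 2) / c (u q)) p
          - pdx (fun q => R q ^ 2 + S q ^ 2) p = 0 := by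
  have hu1 : ContDiff ℝ 1 u := hu.of_le one_le_two
  have hud : Differentiable ℝ u := hu1.differentiable one_ne_zero
  have hP : ContDiff ℝ 1 (fun q => fderiv ℝ u q) := hu.fderiv_right le_rfl
  have hT : Differentiable ℝ (pdt u) := (hP.clm_apply contDiff_const).differentiable one_ne_zero
  have hX : Differentiable ℝ (pdx u) := (hP.clm_apply contDiff_const).differentiable one_ne_zero
  have hcu : Differentiable ℝ (fun q => c (u q)) :=
    ((hc.comp hu1).differentiable one_ne_zero)
  intro p
  -- abbreviations for pointwise values
  have hTp := hT.differentiableAt (x := p)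
  have hXp := hX.differentiableAt (x := p)
  have hcup := hcu.differentiableAt (x := p)
  have hup := hud.differentiableAt (x := p)
  have hcp : DifferentiableAt ℝ c (u p) := (hc.differentiable one_ne_zero).differentiableAt
  -- derivative of c∘u in each direction
  have hct : fderiv ℝ (fun q => c (u q)) p (1,0) = deriv c (u p) * pdt u p :=
    fd_comp hcp hup
  have hcx : fderiv ℝ (fun q => c (u q)) p (0,1) = deriv c (u p) * pdx u p :=
    fd_comp hcp hup
  -- PDE expansion
  have e0 : pdx (fun q => c (u q) * pdx u q) p
      = c (u p) * pdx (pdx u) p + pdx u p * (deriv c (u p) * pdx u p) := by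
    show fderiv ℝ (fun q => (fun q => c (u q)) q * pdx u q) p (0,1) = _
    rw [fd_mul hcup hXp, hcx]; rfl
  have hPDE : pdt (pdt u) p
      = c (u p) * (c (u p) * pdx (pdx u) p + pdx u p * (deriv c (u p) * pdx u p)) := by
    have h := heq p
    rw [e0] at h
    linarith
  have hsym : pdx (pdt u) p = pdt (pdx u) p := mixed_symm hu p
  -- rewrite the four functions in canonical form
  have hF1 : (fun q => R q ^ 2 + S q ^ 2)
      = fun q => 2 * pdt u q ^ 2 + 2 * (c (u q) * pdx u q) ^ 2 := by
    funext q; rw [hR, hS]; ring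
  have hG1 : (fun q => c (u q) * (R q ^ 2 - S q ^ 2))
      = fun q => 4 * ((c (u q) * c (u q)) * (pdt u q * pdx u q)) := by
    funext q; rw [hR, hS]; ring
  have hF2 : (fun q => (R q ^ 2 - S q ^ 2) / c (u q))
      = fun q => 4 * (pdt u q * pdx u q) := by
    funext q; rw [hR, hS]
    have hne : c (u q) ≠ 0 := (hcpos _).ne'
    field_simp
    ring
  -- differentiability of building blocks at p
  have hW : DifferentiableAt ℝ (fun q => c (u q) * pdx u q) p := hcup.mul hXp
  have hcc : DifferentiableAt ℝ (fun q => c (u q) * c (u q)) p := hcup.mul hcup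
  have hTX : DifferentiableAt ℝ (fun q => pdt u q * pdx u q) p := hTp.mul hXp
  -- compute pd of F1 in a direction v
  have dF1 : ∀ v : ℝ × ℝ,
      fderiv ℝ (fun q => 2 * pdt u q ^ 2 + 2 * (c (u q) * pdx u q) ^ 2) p v
      = 2 * (2 * pdt u p * fderiv ℝ (pdt u) p v)
        + 2 * (2 * (c (u p) * pdx u p)
            * (c (u p) * fderiv ℝ (pdx u) p v
              + pdx u p * fderiv ℝ (fun q => c (u q)) p v)) := by
    intro v
    rw [fd_add (f := fun q => 2 * pdt u q ^ 2) (g := fun q => 2 * (c (u q) * pdx u q) ^ 2)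
        ((hTp.pow 2).const_mul 2) ((hW.pow 2).const_mul 2),
      fd_cmul (f := fun q => pdt u q ^ 2) 2 (hTp.pow 2),
      fd_cmul (f := fun q => (c (u q) * pdx u q) ^ 2) 2 (hW.pow 2), fd_sq hTp, fd_sq hW, fd_mul hcup hXp]
  have dG1 : fderiv ℝ (fun q => 4 * ((c (u q) * c (u q)) * (pdt u q * pdx u q))) p (0,1)
      = 4 * ((c (u p) * c (u p))
            * (pdt u p * fderiv ℝ (pdx u) p (0,1) + pdx u p * fderiv ℝ (pdt u) p (0,1))
          + (pdt u p * pdx u p)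
            * (c (u p) * fderiv ℝ (fun q => c (u q)) p (0,1)
              + c (u p) * fderiv ℝ (fun q => c (u q)) p (0,1))) := by
    rw [fd_cmul (f := fun q => (c (u q) * c (u q)) * (pdt u q * pdx u q)) 4 (hcc.mul hTX), fd_mul hcc hTX, fd_mul hTp hXp, fd_mul hcup hcup]
  have dF2 : fderiv ℝ (fun q => 4 * (pdt u q * pdx u q)) p (1,0)
      = 4 * (pdt u p * fderiv ℝ (pdx u) p (1,0) + pdx u p * fderiv ℝ (pdt u) p (1,0)) := by
    rw [fd_cmul 4 hTX, fd_mul hTp hXp]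
  constructor
  · show fderiv ℝ (fun q => R q ^ 2 + S q ^ 2) p (1,0)
        - fderiv ℝ (fun q => c (u q) * (R q ^ 2 - S q ^ 2)) p (0,1) = 0
    rw [hF1, hG1, dF1 (1,0), dG1, hct, hcx]
    have h1 : fderiv ℝ (pdt u) p (1,0) = pdt (pdt u) p := rfl
    have h2 : fderiv ℝ (pdx u) p (1,0) = pdt (pdx u) p := rfl
    have h3 : fderiv ℝ (pdt u) p (0,1) = pdx (pdt u) p := rfl
    have h4 : fderiv ℝ (pdx u) p (0,1) = pdx (pdx u) p := rfl
    rw [h1, h2, h3, h4, hPDE, hsym]; ring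
  · show fderiv ℝ (fun q => (R q ^ 2 - S q ^ 2) / c (u q)) p (1,0)
        - fderiv ℝ (fun q => R q ^ 2 + S q ^ 2) p (0,1) = 0
    rw [hF2, hF1, dF2, dF1 (0,1), hcx]
    have h1 : fderiv ℝ (pdt u) p (1,0) = pdt (pdt u) p := rfl
    have h2 : fderiv ℝ (pdx u) p (1,0) = pdt (pdx u) p := rfl
    have h3 : fderiv ℝ (pdt u) p (0,1) = pdx (pdt u) p := rfl
    have h4 : fderiv ℝ (pdx u) p (0,1) = pdx (pdx u) p := rfl
    rw [h1, h2, h3, h4, hPDE, hsym]; ring
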